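/- Let p1, p2, p3 be real numbers with p1 > 0, p2 > 0, p3 > 0, p1 + p2 + p3 = 1, p2 > p1, p2 > p3, and p2 < 1/2. Set p(a) = p2, p(b) = p1, p(c) = p3. Then a is the unique most probable tree, yet the marginal-log scores satisfy s(a) < s(b). (Parametric family of counterexamples underlying Theorem 1: s(a) = log(p1+p2) + log p2 and s(b) = log(p1+p2) + log(p1+p3), and p2 < 1/2 implies p2 < p1 + p3.) -/

import Mathlib

/-- Parametric family of counterexamples underlying Theorem 1.
With `p a = p2`, `p b = p1`, `p c = p3`, where `p1, p2, p3 > 0` sum to one,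
`p2 > p1`, `p2 > p3` and `p2 < 1/2`, the tree `a` is the unique most probable
tree yet the marginal-log scores satisfy `s a < s b`. -/
theorem stmt_1 (p1 p2 p3 : ℝ) (h1 : 0 < p1) (h2 : 0 < p2) (h3 : 0 < p3)
    (hsum : p1 + p2 + p3 = 1) (h21 : p2 > p1) (h23 : p2 > p3) (hhalf : p2 < 1 / 2) :
    let a : Finset (ℕ × ℕ) := {(0, 1), (1, 2)}
    let b : Finset (ℕ × ℕ) := {(0, 1), (0, 2)}
    let c : Finset (ℕ × ℕ) := {(0, 2), (2, 1)}
    let p : Finset (ℕ × ℕ) → ℝ := fun t =>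
      if t = a then p2 else if t = b then p1 else if t = c then p3 else 0
    let mu : ℕ × ℕ → ℝ := fun e =>
      ∑ t ∈ ({a, b, c} : Finset (Finset (ℕ × ℕ))).filter (fun t => e ∈ t), p t
    let s : Finset (ℕ × ℕ) → ℝ := fun t => ∑ e ∈ t, Real.log (mu e)
    (p a > p b ∧ p a > p c) ∧ s a < s b := by
  intro a b c p mu s
  have hab : a ≠ b := by decide
  have hac : a ≠ c := by decide
  have hbc : b ≠ c := by decide
  constructor
  · constructor <;> simp [p, hab, hac, hbc] <;> assumption
  · have hsa : s a = Real.log (p2 + p1) + Real.log p2 := by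
      simp [s, mu, a, b, c, p, Finset.filter_insert, Finset.filter_singleton]
      rw [Finset.sum_pair hab]
      simp [a, b, c, hab, hab.symm, hac, hbc]
    have hsb : s b = Real.log (p2 + p1) + Real.log (p1 + p3) := by
      simp [s, mu, a, b, c, p, Finset.filter_insert, Finset.filter_singleton]
      rw [Finset.sum_pair hab, Finset.sum_pair hbc]
      simp [a, b, c, hab, hab.symm, hac, hac.symm, hbc, hbc.symm]
    rw [hsa, hsb]
    have : p2 < p1 + p3 := by linarith
    have := Real.log_lt_log h2 this
    linarith
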